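/- arXiv:math/0509726 — 4 statements merged into one kernel-verified Lean document; each statement's English description precedes it below -/
import Mathlib

section
/- With Γ = Σ_{k=1}^∞ ρ_k² < ∞, w_k(ε) = ε²ν_k²/λ_k², and k_γ(ε) = max{ m : Σ_{k=1}^m (ρ_k² + w_k(ε)) ≤ Γ }, the following limit holds: lim_{ε→0} [ Σ_{k=1}^{k_γ(ε)} ε²ν_k²/λ_k² + Σ_{k=k_γ(ε)+1}^∞ ρ_k² ] = 0. -/
open Filter
open scoped Topology

/-- Lemma 3 ii): with `Γ = ∑ ρ_k² < ∞`, `w_k(ε) = ε²ν_k²/λ_k²` and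
`k_γ(ε) = max { m : ∑_{k=1}^m (ρ_k² + w_k(ε)) ≤ Γ }`, one has
`∑_{k=1}^{k_γ(ε)} ε²ν_k²/λ_k² + ∑_{k=k_γ(ε)+1}^∞ ρ_k² → 0` as `ε → 0⁺`. -/
theorem stmt7 (ρ ν lam : ℕ → ℝ)
    (hρ : ∀ k, 0 < ρ k) (hν : ∀ k, 0 < ν k) (hlam : ∀ k, 0 < lam k)
    (hsum : Summable fun k => ρ k ^ 2)
    (kγ : ℝ → ℕ)
    (hkγ : ∀ ε > (0 : ℝ),
      (∑ k ∈ Finset.range (kγ ε), (ρ k ^ 2 + ε ^ 2 * ν k ^ 2 / lam k ^ 2) ≤ ∑' k, ρ k ^ 2) ∧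
      (∀ m : ℕ,
        (∑ k ∈ Finset.range m, (ρ k ^ 2 + ε ^ 2 * ν k ^ 2 / lam k ^ 2) ≤ ∑' k, ρ k ^ 2) →
        m ≤ kγ ε)) :
    Tendsto
      (fun ε => (∑ k ∈ Finset.range (kγ ε), ε ^ 2 * ν k ^ 2 / lam k ^ 2)
        + ∑' k : ℕ, ρ (kγ ε + k) ^ 2)
      (𝓝[>] (0 : ℝ)) (𝓝 0) := by
  set Γ := ∑' k, ρ k ^ 2 with hΓ
  -- tails
  have htsum : ∀ n : ℕ, Summable fun k => ρ (k + n) ^ 2 := fun n =>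
    (summable_nat_add_iff n).2 hsum
  have hsplit : ∀ n : ℕ, ∑ k ∈ Finset.range n, ρ k ^ 2 + ∑' k, ρ (k + n) ^ 2 = Γ :=
    fun n => Summable.sum_add_tsum_nat_add n hsum
  have htailpos : ∀ n : ℕ, 0 < ∑' k, ρ (k + n) ^ 2 := fun n =>
    Summable.tsum_pos (htsum n) (fun k => sq_nonneg _) 0 (by simpa using pow_pos (hρ n) 2)
  have htail0 : Tendsto (fun n => ∑' k, ρ (k + n) ^ 2) atTop (𝓝 0) :=
    tendsto_sum_nat_add (fun k => ρ k ^ 2)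
  -- kγ tends to ∞
  have hkto : Tendsto kγ (𝓝[>] (0 : ℝ)) atTop := by
    rw [tendsto_atTop]
    intro m
    set S := ∑ k ∈ Finset.range m, ρ k ^ 2 with hS
    set C := ∑ k ∈ Finset.range m, ν k ^ 2 / lam k ^ 2 with hC
    have hC0 : 0 ≤ C := Finset.sum_nonneg fun k _ =>
      div_nonneg (sq_nonneg _) (sq_nonneg _)
    have hSΓ : S < Γ := by
      have := hsplit m
      have := htailpos m
      linarith
    have hδpos : 0 < (Γ - S) / (C + 1) := div_pos (by linarith) (by linarith)
    have hδ : 0 < Real.sqrt ((Γ - S) / (C + 1)) := Real.sqrt_pos.2 hδpos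
    filter_upwards [Ioo_mem_nhdsGT_of_mem ⟨le_refl (0 : ℝ), hδ⟩] with ε hε
    obtain ⟨hε0, hεδ⟩ := hε
    refine (hkγ ε hε0).2 m ?_
    have hε2 : ε ^ 2 < (Γ - S) / (C + 1) := by
      have := Real.sq_sqrt hδpos.le
      nlinarith
    have heq : ∑ k ∈ Finset.range m, (ρ k ^ 2 + ε ^ 2 * ν k ^ 2 / lam k ^ 2)
        = S + ε ^ 2 * C := by
      rw [Finset.sum_add_distrib, hC, Finset.mul_sum]
      congr 1
      exact Finset.sum_congr rfl fun k _ => by ring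
    rw [heq]
    have h1 : ε ^ 2 * (C + 1) < Γ - S :=
      (lt_div_iff₀ (by linarith : (0:ℝ) < C + 1)).1 hε2
    have : ε ^ 2 * C ≤ Γ - S := by nlinarith [sq_nonneg ε]
    linarith
  -- squeeze
  have hup : Tendsto (fun ε => 2 * ∑' k, ρ (k + kγ ε) ^ 2) (𝓝[>] (0 : ℝ)) (𝓝 0) := by
    have := (htail0.comp hkto).const_mul (2 : ℝ)
    simpa using this
  have hrw : ∀ ε : ℝ, (∑' k : ℕ, ρ (kγ ε + k) ^ 2) = ∑' k, ρ (k + kγ ε) ^ 2 := by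
    intro ε; exact tsum_congr fun k => by rw [add_comm]
  refine tendsto_of_tendsto_of_tendsto_of_le_of_le' tendsto_const_nhds hup ?_ ?_
  · filter_upwards with ε
    have h1 : 0 ≤ ∑ k ∈ Finset.range (kγ ε), ε ^ 2 * ν k ^ 2 / lam k ^ 2 :=
      Finset.sum_nonneg fun k _ => div_nonneg (by positivity) (sq_nonneg _)
    have h2 : 0 ≤ ∑' k : ℕ, ρ (kγ ε + k) ^ 2 := by
      rw [hrw]; exact (htailpos (kγ ε)).le
    linarith
  · filter_upwards [self_mem_nhdsWithin] with ε hε0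
    have hε0 : (0 : ℝ) < ε := hε0
    have hle := (hkγ ε hε0).1
    have heq : ∑ k ∈ Finset.range (kγ ε), (ρ k ^ 2 + ε ^ 2 * ν k ^ 2 / lam k ^ 2)
        = (∑ k ∈ Finset.range (kγ ε), ρ k ^ 2)
          + ∑ k ∈ Finset.range (kγ ε), ε ^ 2 * ν k ^ 2 / lam k ^ 2 :=
      Finset.sum_add_distrib
    have hsp := hsplit (kγ ε)
    rw [hrw]
    rw [heq] at hle
    linarith
end

section
/- Probabilistic regularization (Theorem 2): Let {λ_k}, {ρ_k}, {ν_k} be positive sequences with Σ ρ_k² = Γ < ∞. For ε > 0 define I(ε) = { k : λ_k ρ_k ≥ ε ν_k } and N(ε) its complement, and assume I(ε) is finite for each ε > 0. Then lim_{ε→0} [ Σ_{k∈I(ε)} ε²ν_k²/λ_k² + Σ_{k∈N(ε)} ρ_k² ] = 0. -/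
open Filter
open scoped Topology

/-- Theorem 2, probabilistic regularization: with positive sequences
`λ_k, ρ_k, ν_k`, `∑ ρ_k² = Γ < ∞`, and the informative set
`I(ε) = { k : λ_k ρ_k ≥ ε ν_k }` finite for each `ε > 0`, the global mean-square error
`∑_{k∈I(ε)} ε²ν_k²/λ_k² + ∑_{k∈N(ε)} ρ_k²` tends to `0` as `ε → 0⁺`. -/
theorem stmt9 (lam ρ ν : ℕ → ℝ)
    (hlam : ∀ k, 0 < lam k) (hρ : ∀ k, 0 < ρ k) (hν : ∀ k, 0 < ν k)
    (hsum : Summable fun k => ρ k ^ 2)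
    (hfin : ∀ ε > (0 : ℝ), {k : ℕ | ε * ν k ≤ lam k * ρ k}.Finite) :
    Tendsto
      (fun ε =>
        (∑' k : {k : ℕ // ε * ν k ≤ lam k * ρ k}, ε ^ 2 * ν k ^ 2 / lam k ^ 2)
        + ∑' k : {k : ℕ // lam k * ρ k < ε * ν k}, ρ k ^ 2)
      (𝓝[>] (0 : ℝ)) (𝓝 0) := by
  set g : ℝ → ℕ → ℝ := fun ε k =>
    if ε * ν k ≤ lam k * ρ k then ε ^ 2 * ν k ^ 2 / lam k ^ 2 else ρ k ^ 2 with hg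
  -- bound : for ε > 0, g ε k ≤ ρ k ^ 2
  have hb : ∀ ε > (0:ℝ), ∀ k, ‖g ε k‖ ≤ ρ k ^ 2 := by
    intro ε hε k
    simp only [hg]
    by_cases h : ε * ν k ≤ lam k * ρ k
    · rw [if_pos h, Real.norm_eq_abs, abs_of_nonneg (by positivity)]
      rw [div_le_iff₀ (pow_pos (hlam k) 2)]
      nlinarith [hν k, hlam k, hρ k, mul_pos hε (hν k)]
    · rw [if_neg h, Real.norm_eq_abs, abs_of_nonneg (by positivity)]
  have hgsum : ∀ ε > (0:ℝ), Summable (g ε) := by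
    intro ε hε
    exact hsum.of_norm_bounded (hb ε hε)
  -- The expression equals ∑' k, g ε k for ε > 0
  have key : ∀ ε > (0:ℝ),
      (∑' k : {k : ℕ // ε * ν k ≤ lam k * ρ k}, ε ^ 2 * ν k ^ 2 / lam k ^ 2)
        + (∑' k : {k : ℕ // lam k * ρ k < ε * ν k}, ρ k ^ 2)
      = ∑' k, g ε k := by
    intro ε hε
    have h1 : (∑' k : {k : ℕ // ε * ν k ≤ lam k * ρ k}, ε ^ 2 * ν k ^ 2 / lam k ^ 2)
        = ∑' k : {k : ℕ | ε * ν k ≤ lam k * ρ k}, g ε k := by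
      refine tsum_congr fun k => ?_
      simp only [hg, if_pos k.2]
    have h2 : (∑' k : {k : ℕ // lam k * ρ k < ε * ν k}, ρ k ^ 2)
        = ∑' k : ({k : ℕ | ε * ν k ≤ lam k * ρ k}ᶜ : Set ℕ), g ε k := by
      have hset : ({k : ℕ | ε * ν k ≤ lam k * ρ k}ᶜ : Set ℕ)
          = {k : ℕ | lam k * ρ k < ε * ν k} := by
        ext k; simp [not_le]
      rw [hset]
      refine tsum_congr fun k => ?_
      simp only [hg, if_neg (not_le.2 k.2)]
    rw [h1, h2]
    exact (hgsum ε hε).tsum_subtype_add_tsum_subtype_compl _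
  -- dominated convergence
  have hlim : Tendsto (fun ε => ∑' k, g ε k) (𝓝[>] (0:ℝ)) (𝓝 (∑' _k : ℕ, (0:ℝ))) := by
    refine tendsto_tsum_of_dominated_convergence (f := g) (g := fun _ => (0:ℝ)) hsum (fun k => ?_) ?_
    · -- pointwise limit
      have hev : ∀ᶠ ε in 𝓝[>] (0:ℝ), g ε k = ε ^ 2 * ν k ^ 2 / lam k ^ 2 := by
        have : ∀ᶠ ε in 𝓝 (0:ℝ), ε * ν k ≤ lam k * ρ k := by
          have hc : Tendsto (fun ε : ℝ => ε * ν k) (𝓝 0) (𝓝 (0 * ν k)) :=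
            (continuous_mul_right _).tendsto 0
          rw [zero_mul] at hc
          exact (hc.eventually_lt_const (mul_pos (hlam k) (hρ k))).mono
            fun ε h => h.le
        exact (this.filter_mono nhdsWithin_le_nhds).mono fun ε h => by
          simp only [hg, if_pos h]
      refine Tendsto.congr' (hev.mono fun ε h => h.symm) ?_
      have : Tendsto (fun ε : ℝ => ε ^ 2 * ν k ^ 2 / lam k ^ 2) (𝓝 0)
          (𝓝 ((0:ℝ) ^ 2 * ν k ^ 2 / lam k ^ 2)) := by
        apply Tendsto.div_const
        exact ((continuous_pow 2).tendsto 0).mul_const _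
      simpa using this.mono_left nhdsWithin_le_nhds
    · filter_upwards [self_mem_nhdsWithin] with ε hε
      exact hb ε hε
  refine Tendsto.congr' ?_ (by simpa using hlim)
  filter_upwards [self_mem_nhdsWithin] with ε hε
  exact (key ε hε).symm
end

section
/- Convergence of the Tikhonov regularized solution: Suppose f satisfies ‖Af − ḡ^ε‖ ≤ ε and Σ_k c_k²|f_k|² ≤ E² with c_k² → ∞. Let f⋆(ε) = Σ_k [λ_k ḡ^ε_k / (λ_k² + (ε/E)² c_k²)] ψ_k. Then ‖f − f⋆(ε)‖ → 0 as ε → 0 (E fixed). -/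
open Filter
open scoped RealInnerProductSpace Topology ENNReal

section Aux
variable {H : Type*} [NormedAddCommGroup H] [InnerProductSpace ℝ H] [CompleteSpace H]

lemma aux_hasSum (b : HilbertBasis ℕ ℝ H) (a : ℕ → ℝ)
    (ha : Summable fun k => a k ^ 2) :
    HasSum (fun k => a k • b k) (∑' k, a k • b k) := by
  have hmem : Memℓp a 2 := by
    apply memℓp_gen
    have he : (fun i => ‖a i‖ ^ (2 : ℝ≥0∞).toReal) = fun k => a k ^ 2 := by
      funext k
      rw [ENNReal.toReal_ofNat, Real.rpow_two, Real.norm_eq_abs, sq_abs]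
    rw [he]; exact ha
  have h : HasSum (fun k => a k • b k) (b.repr.symm ⟨a, hmem⟩) :=
    b.hasSum_repr_symm ⟨a, hmem⟩
  exact h.tsum_eq ▸ h

lemma aux_coeff (b : HilbertBasis ℕ ℝ H) (a : ℕ → ℝ) (x : H)
    (h : HasSum (fun k => a k • b k) x) (j : ℕ) : ⟪x, b j⟫ = a j := by
  have h2 := h.mapL (innerSL ℝ (b j))
  have hon := b.orthonormal
  rw [orthonormal_iff_ite] at hon
  have h3 : (fun k => (innerSL ℝ (b j)) (a k • b k)) = fun k => if k = j then a j else 0 := by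
    funext k
    simp only [innerSL_apply_apply, inner_smul_right, hon j k, mul_ite, mul_one, mul_zero]
    by_cases hk : k = j
    · subst hk; simp
    · simp [hk, Ne.symm hk]
  rw [h3] at h2
  have h4 : HasSum (fun k => if k = j then a j else 0) (a j) := hasSum_ite_eq j (a j)
  have := h4.unique h2
  rw [real_inner_comm]
  simpa [innerSL_apply_apply] using this.symm

omit [CompleteSpace H] in
lemma aux_parseval (b : HilbertBasis ℕ ℝ H) (x : H) :
    HasSum (fun k => ⟪x, b k⟫ ^ 2) (‖x‖ ^ 2) := by
  have := b.hasSum_inner_mul_inner x x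
  simpa [real_inner_comm, real_inner_self_eq_norm_sq, sq] using this

-- elementary inequality: (lam*t/D)^2 ≤ t^2/(4*α*c²) where D = lam² + α c²
lemma aux_ineq1 (L t p : ℝ) (hL : 0 < L) (hp : 0 < p) :
    (L * t / (L ^ 2 + p)) ^ 2 ≤ t ^ 2 / (4 * p) := by
  rw [div_pow, div_le_div_iff₀ (by positivity) (by positivity)]
  nlinarith [sq_nonneg (L ^ 2 - p), sq_nonneg t, sq_nonneg (t * (L ^ 2 - p)),
    sq_nonneg (L * t), mul_pos hL hp]

lemma aux_ineq2 (L t p : ℝ) (hL : 0 < L) (hp : 0 < p) :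
    (p * t / (L ^ 2 + p)) ^ 2 ≤ t ^ 2 := by
  rw [div_pow]
  rw [div_le_iff₀ (by positivity)]
  nlinarith [sq_nonneg t, sq_nonneg (t * L), sq_nonneg (t * L ^ 2), sq_nonneg (t * p), mul_pos hL hp]

lemma aux_ineq3 (L t p : ℝ) (hL : 0 < L) (hp : 0 < p) :
    (L * t / (L ^ 2 + p)) ^ 2 ≤ t ^ 2 / L ^ 2 := by
  rw [div_pow, div_le_div_iff₀ (by positivity) (by positivity)]
  nlinarith [sq_nonneg (L * t), sq_nonneg (t * p), mul_pos hL hp, sq_nonneg (L * t * p)]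

lemma aux_ineq4 (L t p : ℝ) (hL : 0 < L) (hp : 0 < p) :
    (p * t / (L ^ 2 + p)) ^ 2 ≤ (p * t / L ^ 2) ^ 2 := by
  rw [div_pow, div_pow]
  apply div_le_div_of_nonneg_left (by positivity) (by positivity)
  apply pow_le_pow_left₀ (by positivity)
  linarith

end Aux

section Est

set_option maxHeartbeats 1000000 in
lemma aux_est' (lam c fk gk : ℕ → ℝ) (hlam : ∀ k, 0 < lam k) (hc : ∀ k, 0 < c k)
    (α : ℝ) (hα : 0 < α) (ε : ℝ)
    (hfk2 : Summable fun k => fk k ^ 2)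
    (hδsum : Summable fun k => (lam k * fk k - gk k) ^ 2)
    (hs : ∑' k, (lam k * fk k - gk k) ^ 2 ≤ ε ^ 2)
    (N : ℕ) (Mv : ℝ) (hMv : 0 < Mv) (hM : ∀ k, N ≤ k → Mv ≤ c k ^ 2)
    (R : ℝ)
    (hR : HasSum (fun k => (fk k - lam k * gk k / (lam k ^ 2 + α * c k ^ 2)) ^ 2) R) :
    R ≤ 2 * ε ^ 2 * (∑ k ∈ Finset.range N, 1 / lam k ^ 2)
      + ε ^ 2 / (2 * α * Mv)
      + 2 * α ^ 2 * (∑ k ∈ Finset.range N, (c k ^ 2 * fk k / lam k ^ 2) ^ 2)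
      + 2 * ∑' k, fk (k + N) ^ 2 := by
  obtain ⟨δ, hδ_def⟩ : ∃ d : ℕ → ℝ, d = fun k => lam k * fk k - gk k := ⟨_, rfl⟩
  obtain ⟨D, hD_def⟩ : ∃ d : ℕ → ℝ, d = fun k => lam k ^ 2 + α * c k ^ 2 := ⟨_, rfl⟩
  obtain ⟨a, ha_def⟩ : ∃ d : ℕ → ℝ, d = fun k => lam k * gk k / D k := ⟨_, rfl⟩
  have hD : ∀ k, 0 < D k := fun k => by
    have := hlam k; have := hc k
    simp only [hD_def]; positivity
  have hδsum2 : Summable fun k => δ k ^ 2 := by simp only [hδ_def]; exact hδsum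
  have hs2 : ∑' k, δ k ^ 2 ≤ ε ^ 2 := by simp only [hδ_def]; exact hs
  have hR2 : HasSum (fun k => (fk k - a k) ^ 2) R := by
    simp only [ha_def, hD_def]; exact hR
  clear hδsum hs hR
  rename' hδsum2 => hδsum, hs2 => hs, hR2 => hR
  have hδε : ∀ k, δ k ^ 2 ≤ ε ^ 2 := fun k =>
    le_trans (Summable.le_tsum hδsum k fun j _ => sq_nonneg _) hs
  have hAle : ∀ k, (lam k * δ k / D k) ^ 2 ≤ δ k ^ 2 / (4 * (α * c k ^ 2)) := fun k => by
    rw [hD_def]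
    exact aux_ineq1 (lam k) (δ k) (α * c k ^ 2) (hlam k) (by have := hc k; positivity)
  have hBle : ∀ k, (α * c k ^ 2 * fk k / D k) ^ 2 ≤ fk k ^ 2 := fun k => by
    rw [hD_def]
    exact aux_ineq2 (lam k) (fk k) (α * c k ^ 2) (hlam k) (by have := hc k; positivity)
  have hB : Summable fun k => (α * c k ^ 2 * fk k / D k) ^ 2 :=
    Summable.of_nonneg_of_le (fun k => sq_nonneg _) hBle hfk2
  have hsub : ∀ k, lam k * δ k / D k = (fk k - a k) - α * c k ^ 2 * fk k / D k := by
    intro k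
    have hDk : lam k ^ 2 + α * c k ^ 2 ≠ 0 := by
      have := hlam k; have := hc k; positivity
    simp only [ha_def, hδ_def, hD_def]
    field_simp
    ring
  have hA : Summable fun k => (lam k * δ k / D k) ^ 2 := by
    refine Summable.of_nonneg_of_le (fun k => sq_nonneg _)
      ?_ ((hR.summable.mul_left 2).add (hB.mul_left 2))
    intro k
    rw [hsub k]
    nlinarith [sq_nonneg ((fk k - a k) + α * c k ^ 2 * fk k / D k)]
  -- pointwise bound
  have hptw : ∀ k, (fk k - a k) ^ 2 ≤
      2 * (lam k * δ k / D k) ^ 2 + 2 * (α * c k ^ 2 * fk k / D k) ^ 2 := by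
    intro k
    have hkey : fk k - a k = lam k * δ k / D k + α * c k ^ 2 * fk k / D k := by
      rw [hsub k]; ring
    rw [hkey]
    nlinarith [sq_nonneg (lam k * δ k / D k - α * c k ^ 2 * fk k / D k)]
  have hU : Summable fun k => 2 * (lam k * δ k / D k) ^ 2 + 2 * (α * c k ^ 2 * fk k / D k) ^ 2 :=
    (hA.mul_left 2).add (hB.mul_left 2)
  have hnorm_le : R ≤ 2 * (∑' k, (lam k * δ k / D k) ^ 2)
      + 2 * (∑' k, (α * c k ^ 2 * fk k / D k) ^ 2) := by
    calc R = ∑' k, (fk k - a k) ^ 2 := hR.tsum_eq.symm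
    _ ≤ ∑' k, (2 * (lam k * δ k / D k) ^ 2 + 2 * (α * c k ^ 2 * fk k / D k) ^ 2) :=
        Summable.tsum_le_tsum hptw hR.summable hU
    _ = 2 * (∑' k, (lam k * δ k / D k) ^ 2) + 2 * (∑' k, (α * c k ^ 2 * fk k / D k) ^ 2) := by
        rw [Summable.tsum_add (hA.mul_left 2) (hB.mul_left 2), tsum_mul_left, tsum_mul_left]
  -- bound ∑' A
  have htailδ : ∑' k, δ (k + N) ^ 2 ≤ ε ^ 2 := by
    have h1 := Summable.sum_add_tsum_nat_add N hδsum
    have h2 : 0 ≤ ∑ k ∈ Finset.range N, δ k ^ 2 := Finset.sum_nonneg fun k _ => sq_nonneg _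
    linarith
  have hAbound : ∑' k, (lam k * δ k / D k) ^ 2 ≤
      ε ^ 2 * (∑ k ∈ Finset.range N, 1 / lam k ^ 2) + ε ^ 2 / (4 * α * Mv) := by
    rw [← Summable.sum_add_tsum_nat_add N hA]
    gcongr
    · -- finite part
      rw [Finset.mul_sum]
      apply Finset.sum_le_sum
      intro k _
      calc (lam k * δ k / D k) ^ 2 ≤ δ k ^ 2 / lam k ^ 2 := by
            rw [hD_def]
            exact aux_ineq3 (lam k) (δ k) (α * c k ^ 2) (hlam k) (by have := hc k; positivity)
      _ ≤ ε ^ 2 / lam k ^ 2 := by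
            apply div_le_div_of_nonneg_right (hδε k) (by positivity)
      _ = ε ^ 2 * (1 / lam k ^ 2) := by ring
    · -- tail part
      have h1 : Summable fun k => (lam (k + N) * δ (k + N) / D (k + N)) ^ 2 :=
        (summable_nat_add_iff N).2 hA
      have h2 : Summable fun k => δ (k + N) ^ 2 :=
        (summable_nat_add_iff N).2 hδsum
      have h3 : Summable fun k => δ (k + N) ^ 2 / (4 * α * Mv) := h2.div_const _
      have hle : ∀ k, (lam (k + N) * δ (k + N) / D (k + N)) ^ 2
          ≤ δ (k + N) ^ 2 / (4 * α * Mv) := by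
        intro k
        refine le_trans (hAle (k + N)) ?_
        apply div_le_div_of_nonneg_left (sq_nonneg _) (by positivity)
        have := hM (k + N) (Nat.le_add_left N k)
        nlinarith
      have h4 := Summable.tsum_le_tsum hle h1 h3
      rw [tsum_div_const] at h4
      refine h4.trans ?_
      apply div_le_div_of_nonneg_right htailδ (by positivity)
  -- bound ∑' B
  have hBbound : ∑' k, (α * c k ^ 2 * fk k / D k) ^ 2 ≤
      α ^ 2 * (∑ k ∈ Finset.range N, (c k ^ 2 * fk k / lam k ^ 2) ^ 2)
      + ∑' k, fk (k + N) ^ 2 := by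
    rw [← Summable.sum_add_tsum_nat_add N hB]
    gcongr ?_ + ?_
    · rw [Finset.mul_sum]
      apply Finset.sum_le_sum
      intro k _
      calc (α * c k ^ 2 * fk k / D k) ^ 2 ≤ (α * c k ^ 2 * fk k / lam k ^ 2) ^ 2 := by
            rw [hD_def]
            have := aux_ineq4 (lam k) (fk k) (α * c k ^ 2) (hlam k)
              (by have := hc k; positivity)
            convert this using 3 <;> ring
      _ = α ^ 2 * (c k ^ 2 * fk k / lam k ^ 2) ^ 2 := by
            field_simp
    · have h1 : Summable fun k => (α * c (k + N) ^ 2 * fk (k + N) / D (k + N)) ^ 2 :=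
        (summable_nat_add_iff N).2 hB
      have h2 : Summable fun k => fk (k + N) ^ 2 := (summable_nat_add_iff N).2 hfk2
      exact Summable.tsum_le_tsum (fun k => hBle (k + N)) h1 h2
  have hεq : 2 * (ε ^ 2 / (4 * α * Mv)) = ε ^ 2 / (2 * α * Mv) := by
    field_simp
    ring
  linarith

set_option maxHeartbeats 1000000 in
lemma aux_main {H : Type*} [NormedAddCommGroup H] [InnerProductSpace ℝ H] [CompleteSpace H]
    (b : HilbertBasis ℕ ℝ H) (lam c : ℕ → ℝ) (hlam : ∀ k, 0 < lam k) (hc : ∀ k, 0 < c k)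
    (α : ℝ) (hα : 0 < α) (f g x : H) (ε : ℝ)
    (s : ℝ) (hδP : HasSum (fun k => (lam k * ⟪f, b k⟫ - ⟪g, b k⟫) ^ 2) s) (hsle : s ≤ ε ^ 2)
    (m : ℝ) (hm : 0 < m) (hmall : ∀ k, m ≤ c k ^ 2)
    (hx : x = ∑' k, (lam k * ⟪g, b k⟫ / (lam k ^ 2 + α * c k ^ 2)) • b k)
    (N : ℕ) (Mv : ℝ) (hMv : 0 < Mv) (hM : ∀ k, N ≤ k → Mv ≤ c k ^ 2) :
    ‖f - x‖ ^ 2 ≤ 2 * ε ^ 2 * (∑ k ∈ Finset.range N, 1 / lam k ^ 2)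
      + ε ^ 2 / (2 * α * Mv)
      + 2 * α ^ 2 * (∑ k ∈ Finset.range N, (c k ^ 2 * ⟪f, b k⟫ / lam k ^ 2) ^ 2)
      + 2 * ∑' k, ⟪f, b (k + N)⟫ ^ 2 := by
  have hgk2 : Summable fun k => ⟪g, b k⟫ ^ 2 := (aux_parseval b g).summable
  have hfk2 : Summable fun k => ⟪f, b k⟫ ^ 2 := (aux_parseval b f).summable
  have ha2 : Summable fun k => (lam k * ⟪g, b k⟫ / (lam k ^ 2 + α * c k ^ 2)) ^ 2 := by
    refine Summable.of_nonneg_of_le (fun k => sq_nonneg _) ?_ (hgk2.div_const (4 * (α * m)))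
    intro k
    refine le_trans (aux_ineq1 (lam k) (⟪g, b k⟫) (α * c k ^ 2) (hlam k)
      (by have := hc k; positivity)) ?_
    apply div_le_div_of_nonneg_left (sq_nonneg _) (by positivity)
    have := hmall k
    nlinarith
  have hx' : HasSum (fun k => (lam k * ⟪g, b k⟫ / (lam k ^ 2 + α * c k ^ 2)) • b k) x := by
    rw [hx]; exact aux_hasSum b _ ha2
  have hfsum : HasSum (fun k => ⟪f, b k⟫ • b k) f := by
    have := b.hasSum_repr f
    convert this using 2 with k
    rw [b.repr_apply_apply, real_inner_comm]
  have hdsum : HasSum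
      (fun k => (⟪f, b k⟫ - lam k * ⟪g, b k⟫ / (lam k ^ 2 + α * c k ^ 2)) • b k) (f - x) := by
    have := hfsum.sub hx'
    convert this using 2 with k
    rw [sub_smul]
  have hRsum : HasSum
      (fun k => (⟪f, b k⟫ - lam k * ⟪g, b k⟫ / (lam k ^ 2 + α * c k ^ 2)) ^ 2)
      (‖f - x‖ ^ 2) := by
    have := aux_parseval b (f - x)
    convert this using 2 with k
    rw [aux_coeff b _ _ hdsum k]
  have hs : ∑' k, (lam k * ⟪f, b k⟫ - ⟪g, b k⟫) ^ 2 ≤ ε ^ 2 := hδP.tsum_eq ▸ hsle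
  exact aux_est' lam c (fun k => ⟪f, b k⟫) (fun k => ⟪g, b k⟫) hlam hc α hα ε hfk2
    hδP.summable hs N Mv hMv hM _ hRsum

end Est

set_option maxHeartbeats 1000000 in
/-- Proposition 3: convergence of the Tikhonov regularized solution.
Under `‖Af − ḡ^ε‖ ≤ ε` and the a priori bound `∑ c_k² f_k² ≤ E²` with `c_k² → ∞`,
the regularized solution `f⋆(ε) = ∑_k (λ_k ḡ^ε_k/(λ_k² + (ε/E)² c_k²)) ψ_k`
converges to `f` in norm as `ε → 0⁺` (`E` fixed). -/
theorem stmt17 {H : Type*} [NormedAddCommGroup H] [InnerProductSpace ℝ H] [CompleteSpace H]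
    (b : HilbertBasis ℕ ℝ H) (A : H →L[ℝ] H)
    (hA_compact : IsCompactOperator A) (hA_sa : IsSelfAdjoint A)
    (hA_inj : Function.Injective A)
    (lam : ℕ → ℝ) (hlam : ∀ k, 0 < lam k)
    (heig : ∀ k, A (b k) = lam k • b k)
    (c : ℕ → ℝ) (hc : ∀ k, 0 < c k)
    (hc_inf : Tendsto (fun k => c k ^ 2) atTop atTop)
    (E : ℝ) (hE : 0 < E)
    (f : H) (gbar : ℝ → H)
    (hnoise : ∀ ε > (0 : ℝ), ‖A f - gbar ε‖ ≤ ε)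
    (hbound : ∑' k : ℕ, c k ^ 2 * ⟪f, b k⟫ ^ 2 ≤ E ^ 2)
    (hbound' : Summable fun k => c k ^ 2 * ⟪f, b k⟫ ^ 2)
    (fstar : ℝ → H)
    (hfstar : ∀ ε > (0 : ℝ), fstar ε = ∑' k : ℕ,
      (lam k * ⟪gbar ε, b k⟫ / (lam k ^ 2 + (ε / E) ^ 2 * c k ^ 2)) • b k) :
    Tendsto (fun ε => ‖f - fstar ε‖) (𝓝[>] (0 : ℝ)) (𝓝 0) := by
  -- symmetry of A
  have hsym : ∀ x y : H, ⟪A x, y⟫ = ⟪x, A y⟫ :=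
    (ContinuousLinearMap.isSelfAdjoint_iff_isSymmetric.mp hA_sa)
  have hAf : ∀ k, ⟪A f, b k⟫ = lam k * ⟪f, b k⟫ := by
    intro k
    rw [hsym f (b k), heig k, real_inner_smul_right]
  -- global lower bound on c^2
  obtain ⟨N0, hN0⟩ := eventually_atTop.mp (hc_inf.eventually_ge_atTop 1)
  obtain ⟨m, hm, hmall⟩ : ∃ m : ℝ, 0 < m ∧ ∀ k, m ≤ c k ^ 2 := by
    refine ⟨min 1 ((Finset.range (N0 + 1)).inf' Finset.nonempty_range_add_one fun k => c k ^ 2),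
      ?_, ?_⟩
    · apply lt_min one_pos
      rw [Finset.lt_inf'_iff]
      intro k _
      have := hc k; positivity
    · intro k
      rcases le_or_gt N0 k with h | h
      · exact le_trans (min_le_left _ _) (hN0 k h)
      · exact le_trans (min_le_right _ _)
          (Finset.inf'_le _ (Finset.mem_range.mpr (by omega)))
  -- the per-ε bound
  have key : ∀ N : ℕ, ∀ Mv : ℝ, 0 < Mv → (∀ k, N ≤ k → Mv ≤ c k ^ 2) →
      ∀ ε : ℝ, 0 < ε →
      ‖f - fstar ε‖ ^ 2 ≤ 2 * ε ^ 2 * (∑ k ∈ Finset.range N, 1 / lam k ^ 2)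
        + ε ^ 2 / (2 * (ε / E) ^ 2 * Mv)
        + 2 * ((ε / E) ^ 2) ^ 2 * (∑ k ∈ Finset.range N, (c k ^ 2 * ⟪f, b k⟫ / lam k ^ 2) ^ 2)
        + 2 * ∑' k, ⟪f, b (k + N)⟫ ^ 2 := by
    intro N Mv hMv hM ε hε
    have hα : 0 < (ε / E) ^ 2 := by positivity
    have hδP : HasSum (fun k => (lam k * ⟪f, b k⟫ - ⟪gbar ε, b k⟫) ^ 2)
        (‖A f - gbar ε‖ ^ 2) := by
      have := aux_parseval b (A f - gbar ε)
      convert this using 2 with k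
      rw [inner_sub_left, hAf k]
    have hsle : ‖A f - gbar ε‖ ^ 2 ≤ ε ^ 2 :=
      pow_le_pow_left₀ (norm_nonneg _) (hnoise ε hε) 2
    exact aux_main b lam c hlam hc ((ε / E) ^ 2) hα f (gbar ε) (fstar ε) ε _ hδP hsle
      m hm hmall (hfstar ε hε) N Mv hMv hM
  -- the ε-δ argument
  rw [Metric.tendsto_nhdsWithin_nhds]
  intro η hη
  set Mv : ℝ := 2 * E ^ 2 / η ^ 2 + 1 with hMv_def
  have hMv : 0 < Mv := by positivity
  obtain ⟨N1, hN1⟩ := eventually_atTop.mp (hc_inf.eventually_ge_atTop Mv)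
  have htail0 : Tendsto (fun i => ∑' k, ⟪f, b (k + i)⟫ ^ 2) atTop (𝓝 0) :=
    tendsto_sum_nat_add (fun k => ⟪f, b k⟫ ^ 2)
  obtain ⟨N2, hN2⟩ := eventually_atTop.mp
    (htail0.eventually (gt_mem_nhds (by positivity : (0 : ℝ) < η ^ 2 / 16)))
  set N : ℕ := max N1 N2 with hN_def
  set S : ℝ := ∑ k ∈ Finset.range N, 1 / lam k ^ 2 with hS_def
  set K : ℝ := ∑ k ∈ Finset.range N, (c k ^ 2 * ⟪f, b k⟫ / lam k ^ 2) ^ 2 with hK_def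
  have hS0 : 0 ≤ S := Finset.sum_nonneg fun k _ => by have := hlam k; positivity
  have hK0 : 0 ≤ K := Finset.sum_nonneg fun k _ => sq_nonneg _
  refine ⟨min (min 1 E) (min (η ^ 2 / (32 * (S + 1))) (η ^ 2 * E ^ 4 / (32 * (K + 1)))),
    by positivity, ?_⟩
  intro ε hεmem hεdist
  have hε : 0 < ε := hεmem
  rw [Real.dist_eq, sub_zero, abs_of_pos hε] at hεdist
  have hε1 : ε ≤ 1 := le_trans hεdist.le (le_trans (min_le_left _ _) (min_le_left _ _))
  have hεS : ε < η ^ 2 / (32 * (S + 1)) :=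
    lt_of_lt_of_le hεdist (le_trans (min_le_right _ _) (min_le_left _ _))
  have hεK : ε < η ^ 2 * E ^ 4 / (32 * (K + 1)) :=
    lt_of_lt_of_le hεdist (le_trans (min_le_right _ _) (min_le_right _ _))
  have hMN : ∀ k, N ≤ k → Mv ≤ c k ^ 2 := fun k hk =>
    hN1 k (le_trans (le_max_left _ _) hk)
  have hkey := key N Mv hMv hMN ε hε
  rw [← hS_def, ← hK_def] at hkey
  -- bound the four terms
  have hE4 : (0 : ℝ) < E ^ 4 := by positivity
  have hη2 : (0:ℝ) < η ^ 2 := by positivity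
  have hT1 : 2 * ε ^ 2 * S ≤ η ^ 2 / 8 := by
    rw [lt_div_iff₀ (by positivity)] at hεS
    have h1 : ε ^ 2 ≤ ε := by nlinarith
    have h2 : ε ^ 2 * S ≤ ε * S := mul_le_mul_of_nonneg_right h1 hS0
    nlinarith
  have hT2 : ε ^ 2 / (2 * (ε / E) ^ 2 * Mv) < η ^ 2 / 4 := by
    have heq : ε ^ 2 / (2 * (ε / E) ^ 2 * Mv) = E ^ 2 / (2 * Mv) := by
      rw [div_pow]
      field_simp
    have hq : η ^ 2 * (2 * E ^ 2 / η ^ 2) = 2 * E ^ 2 := by field_simp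
    rw [heq, hMv_def, div_lt_iff₀ (by positivity)]
    nlinarith [hq, sq_nonneg η]
  have hT3 : 2 * ((ε / E) ^ 2) ^ 2 * K ≤ η ^ 2 / 8 := by
    have h1 : ((ε / E) ^ 2) ^ 2 = ε ^ 4 / E ^ 4 := by ring
    have h2 : ε ^ 4 ≤ ε := by
      calc ε ^ 4 ≤ ε ^ 1 := pow_le_pow_of_le_one hε.le hε1 (by norm_num)
      _ = ε := pow_one ε
    have e1 : 2 * ((ε / E) ^ 2) ^ 2 * K = 2 * ε ^ 4 * K / E ^ 4 := by
      field_simp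
    have e2 : 2 * (ε / E ^ 4) * (K + 1) = 2 * ε * (K + 1) / E ^ 4 := by ring
    have h3 : 2 * ((ε / E) ^ 2) ^ 2 * K ≤ 2 * (ε / E ^ 4) * (K + 1) := by
      rw [e1, e2]
      apply div_le_div_of_nonneg_right ?_ (by positivity)
      nlinarith [mul_le_mul_of_nonneg_right h2 hK0, hε.le]
    have h4 : 2 * (ε / E ^ 4) * (K + 1) ≤ η ^ 2 / 16 := by
      rw [lt_div_iff₀ (by positivity)] at hεK
      rw [e2, div_le_div_iff₀ hE4 (by norm_num : (0:ℝ) < 16)]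
      nlinarith
    linarith
  have hT4 : 2 * ∑' k, ⟪f, b (k + N)⟫ ^ 2 < η ^ 2 / 4 := by
    have h : ∑' k, ⟪f, b (k + N)⟫ ^ 2 < η ^ 2 / 16 := hN2 N (le_max_right _ _)
    linarith
  have hsq : ‖f - fstar ε‖ ^ 2 < η ^ 2 := by
    have h9 : (0:ℝ) < η ^ 2 := by positivity
    linarith [hkey, hT1, hT2, hT3, hT4]
  rw [Real.dist_eq, sub_zero, abs_of_nonneg (norm_nonneg _)]
  exact lt_of_pow_lt_pow_left₀ 2 hη.le hsq
end

section
/- Convergence of truncated variational approximation: Under the assumptions ‖Af − ḡ^ε‖ ≤ ε and Σ_k c_k²|f_k|² ≤ E² (c_k > 0, c_k → ∞, λ_k > 0 strictly decreasing to 0), define k_α(ε) as the largest integer k such that λ_k ≥ (ε/E)|c_k|, and f⋆¹(ε) = Σ_{k=1}^{k_α(ε)} (ḡ^ε_k/λ_k) ψ_k. Then ‖f − f⋆¹(ε)‖ → 0 as ε → 0 (E fixed). -/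
open Filter
open scoped RealInnerProductSpace Topology

/-- Proposition 4: convergence of the truncated variational approximation
`f⋆¹(ε) = ∑_{k=1}^{k_α(ε)} (ḡ^ε_k/λ_k) ψ_k`, where `k_α(ε)` is the largest index `k`
with `λ_k ≥ (ε/E) c_k`.  Here `hkα₁` says every index satisfying the condition lies below
the truncation point, and `hkα₂` says the last retained index satisfies it. -/
theorem stmt18 {H : Type*} [NormedAddCommGroup H] [InnerProductSpace ℝ H] [CompleteSpace H]
    (b : HilbertBasis ℕ ℝ H) (A : H →L[ℝ] H)
    (hA_compact : IsCompactOperator A) (hA_sa : IsSelfAdjoint A)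
    (hA_inj : Function.Injective A)
    (lam : ℕ → ℝ) (hlam : ∀ k, 0 < lam k)
    (hdec : StrictAnti lam) (hlam0 : Tendsto lam atTop (𝓝 0))
    (heig : ∀ k, A (b k) = lam k • b k)
    (c : ℕ → ℝ) (hc : ∀ k, 0 < c k)
    (hc_inf : Tendsto c atTop atTop)
    (E : ℝ) (hE : 0 < E)
    (f : H) (gbar : ℝ → H)
    (hnoise : ∀ ε > (0 : ℝ), ‖A f - gbar ε‖ ≤ ε)
    (hbound : ∑' k : ℕ, c k ^ 2 * ⟪f, b k⟫ ^ 2 ≤ E ^ 2)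
    (hbound' : Summable fun k => c k ^ 2 * ⟪f, b k⟫ ^ 2)
    (kα : ℝ → ℕ)
    (hkα₁ : ∀ ε > (0 : ℝ), ∀ k : ℕ, (ε / E) * c k ≤ lam k → k < kα ε)
    (hkα₂ : ∀ ε > (0 : ℝ), kα ε = 0 ∨ (ε / E) * c (kα ε - 1) ≤ lam (kα ε - 1)) :
    Tendsto
      (fun ε => ‖f - ∑ k ∈ Finset.range (kα ε), (⟪gbar ε, b k⟫ / lam k) • b k‖)
      (𝓝[>] (0 : ℝ)) (𝓝 0) := by
  have hON : Orthonormal ℝ b := b.orthonormal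
  have hsym : ∀ x y : H, ⟪A x, y⟫ = ⟪x, A y⟫ :=
    ContinuousLinearMap.isSelfAdjoint_iff_isSymmetric.mp hA_sa
  -- partial sums of the Fourier expansion of `f` converge to `f`
  have hsum : HasSum (fun k => ⟪f, b k⟫ • b k) f := by
    have h := b.hasSum_repr f
    convert h using 2 with k
    rw [b.repr_apply_apply, real_inner_comm]
  have hT : Tendsto (fun N => ‖f - ∑ k ∈ Finset.range N, ⟪f, b k⟫ • b k‖) atTop (𝓝 0) := by
    have h2 : Tendsto (fun N => f - ∑ k ∈ Finset.range N, ⟪f, b k⟫ • b k) atTop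
        (𝓝 (f - f)) := tendsto_const_nhds.sub hsum.tendsto_sum_nat
    rw [sub_self] at h2
    simpa using h2.norm
  -- the truncation level tends to infinity
  have hkinf : Tendsto kα (𝓝[>] (0 : ℝ)) atTop := by
    rw [tendsto_atTop]
    intro M
    have hδ : (0 : ℝ) < E * lam M / c M := by
      have := hlam M; have := hc M; positivity
    filter_upwards [Ioo_mem_nhdsGT_of_mem (Set.mem_Ico.mpr ⟨le_refl (0 : ℝ), hδ⟩)] with ε hε
    obtain ⟨hε0, hεδ⟩ := hε
    have h1 : ε * c M < E * lam M := (lt_div_iff₀ (hc M)).mp hεδ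
    have h2 : (ε / E) * c M ≤ lam M := by
      rw [div_mul_eq_mul_div, div_le_iff₀ hE]
      nlinarith
    exact le_of_lt (hkα₁ ε hε0 M h2)
  have hk1 : Tendsto (fun ε => kα ε - 1) (𝓝[>] (0 : ℝ)) atTop :=
    (tendsto_sub_atTop_nat 1).comp hkinf
  have hEc : Tendsto (fun ε => E / c (kα ε - 1)) (𝓝[>] (0 : ℝ)) (𝓝 0) :=
    (hc_inf.comp hk1).const_div_atTop E
  have hTk : Tendsto (fun ε => ‖f - ∑ k ∈ Finset.range (kα ε), ⟪f, b k⟫ • b k‖)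
      (𝓝[>] (0 : ℝ)) (𝓝 0) := hT.comp hkinf
  -- squeeze
  apply squeeze_zero' (g := fun ε =>
    ‖f - ∑ k ∈ Finset.range (kα ε), ⟪f, b k⟫ • b k‖ + E / c (kα ε - 1))
  · exact Eventually.of_forall fun _ => norm_nonneg _
  · filter_upwards [self_mem_nhdsWithin, hkinf.eventually_ge_atTop 1] with ε hε hN1
    have hε0 : (0 : ℝ) < ε := hε
    set N := kα ε with hN
    have hk2 : (ε / E) * c (N - 1) ≤ lam (N - 1) :=
      (hkα₂ ε hε0).resolve_left (by omega)
    have hnz : ∀ k, lam k ≠ 0 := fun k => ne_of_gt (hlam k)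
    -- key identity for coefficients
    have hkey : ∀ k : ℕ, ⟪f, b k⟫ - ⟪gbar ε, b k⟫ / lam k
        = ⟪A f - gbar ε, b k⟫ / lam k := by
      intro k
      have hAf : ⟪A f, b k⟫ = lam k * ⟪f, b k⟫ := by
        rw [hsym, heig, real_inner_smul_right]
      rw [inner_sub_left, hAf, eq_div_iff (hnz k), sub_mul, div_mul_cancel₀ _ (hnz k)]
      ring
    -- decomposition
    have hdecomp : f - ∑ k ∈ Finset.range N, (⟪gbar ε, b k⟫ / lam k) • b k
        = (f - ∑ k ∈ Finset.range N, ⟪f, b k⟫ • b k)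
          + ∑ k ∈ Finset.range N, (⟪f, b k⟫ - ⟪gbar ε, b k⟫ / lam k) • b k := by
      simp only [sub_smul, Finset.sum_sub_distrib]
      abel
    rw [hdecomp]
    refine le_trans (norm_add_le _ _) (add_le_add_right ?_ _)
    -- bound the data-error term
    set S := ∑ k ∈ Finset.range N, (⟪f, b k⟫ - ⟪gbar ε, b k⟫ / lam k) • b k with hS
    have hEcpos : 0 ≤ E / c (N - 1) := le_of_lt (div_pos hE (hc _))
    refine le_of_pow_le_pow_left₀ two_ne_zero hEcpos ?_
    have hnorm2 : ‖S‖ ^ 2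
        = ∑ k ∈ Finset.range N, (⟪f, b k⟫ - ⟪gbar ε, b k⟫ / lam k) ^ 2 := by
      rw [← real_inner_self_eq_norm_sq, hS, hON.inner_sum]
      simp [sq]
    rw [hnorm2]
    have hlamN : 0 < lam (N - 1) := hlam _
    have hstep1 : ∑ k ∈ Finset.range N, (⟪f, b k⟫ - ⟪gbar ε, b k⟫ / lam k) ^ 2
        ≤ (∑ k ∈ Finset.range N, ⟪A f - gbar ε, b k⟫ ^ 2) / lam (N - 1) ^ 2 := by
      rw [Finset.sum_div]
      refine Finset.sum_le_sum fun k hk => ?_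
      rw [hkey k, div_pow]
      have hle : lam (N - 1) ≤ lam k :=
        hdec.antitone (by simp at hk; omega)
      have h2 : lam (N - 1) ^ 2 ≤ lam k ^ 2 :=
        pow_le_pow_left₀ (le_of_lt hlamN) hle 2
      exact div_le_div_of_nonneg_left (sq_nonneg _) (by positivity) h2
    have hbessel : ∑ k ∈ Finset.range N, ⟪A f - gbar ε, b k⟫ ^ 2 ≤ ε ^ 2 := by
      have h := hON.sum_inner_products_le (s := Finset.range N) (A f - gbar ε)
      have h2 : ∑ k ∈ Finset.range N, ⟪A f - gbar ε, b k⟫ ^ 2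
          = ∑ k ∈ Finset.range N, ‖⟪b k, A f - gbar ε⟫‖ ^ 2 := by
        refine Finset.sum_congr rfl fun k _ => ?_
        rw [real_inner_comm, Real.norm_eq_abs, sq_abs]
      rw [h2]
      refine h.trans ?_
      have := hnoise ε hε0
      nlinarith [norm_nonneg (A f - gbar ε)]
    have hstep2 : (∑ k ∈ Finset.range N, ⟪A f - gbar ε, b k⟫ ^ 2) / lam (N - 1) ^ 2
        ≤ ε ^ 2 / lam (N - 1) ^ 2 := by
      gcongr
    have hlamlow : (ε / E) * c (N - 1) ≤ lam (N - 1) := hk2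
    have hlowpos : 0 < (ε / E) * c (N - 1) := by
      have := hc (N - 1); positivity
    have hstep3 : ε ^ 2 / lam (N - 1) ^ 2 ≤ ε ^ 2 / ((ε / E) * c (N - 1)) ^ 2 :=
      div_le_div_of_nonneg_left (sq_nonneg _) (by positivity)
        (pow_le_pow_left₀ (le_of_lt hlowpos) hlamlow 2)
    have heq : ε ^ 2 / ((ε / E) * c (N - 1)) ^ 2 = (E / c (N - 1)) ^ 2 := by
      have hc' := (hc (N - 1)).ne'
      field_simp
    calc ∑ k ∈ Finset.range N, (⟪f, b k⟫ - ⟪gbar ε, b k⟫ / lam k) ^ 2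
        ≤ (∑ k ∈ Finset.range N, ⟪A f - gbar ε, b k⟫ ^ 2) / lam (N - 1) ^ 2 := hstep1
      _ ≤ ε ^ 2 / lam (N - 1) ^ 2 := hstep2
      _ ≤ ε ^ 2 / ((ε / E) * c (N - 1)) ^ 2 := hstep3
      _ = (E / c (N - 1)) ^ 2 := heq
  · simpa using hTk.add hEc
end
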